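/- Given a parameter r and any set of n points in [0,2)^d, there exists a partition of [0,2)^d into O(n/r) generalized quadtree cells, each containing at most r of the points, where a generalized quadtree cell is either a quadtree cell or the set difference of an outer quadtree cell and one inner quadtree cell contained in it. -/

import Mathlib

/-- An axis-aligned hypercube in `ℝ^d` with lower corner `a` and side length `ℓ`. -/
def hcube (d : ℕ) (a : Fin d → ℝ) (ℓ : ℝ) : Set (Fin d → ℝ) :=
  {x | ∀ i, a i ≤ x i ∧ x i ≤ a i + ℓ}

/-- The side length of an object: the side length of its smallest enclosing
axis-aligned hypercube. -/
noncomputable def sideLength (d : ℕ) (u : Set (Fin d → ℝ)) : ℝ :=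
  sInf {ℓ : ℝ | 0 ≤ ℓ ∧ ∃ a : Fin d → ℝ, u ⊆ hcube d a ℓ}

/-- The quadtree cell `[c₁·2^{-k}, (c₁+1)·2^{-k}) × ⋯ × [c_d·2^{-k}, (c_d+1)·2^{-k})`. -/
def qtCell (d : ℕ) (k : ℤ) (c : Fin d → ℤ) : Set (Fin d → ℝ) :=
  {x | ∀ i, (c i : ℝ) * (2 : ℝ) ^ (-k) ≤ x i ∧ x i < ((c i : ℝ) + 1) * (2 : ℝ) ^ (-k)}

/-- `γ` is a quadtree cell. -/
def IsQuadtreeCell (d : ℕ) (γ : Set (Fin d → ℝ)) : Prop :=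
  ∃ (k : ℤ) (c : Fin d → ℤ), γ = qtCell d k c

/-- An object `u` is `C`-aligned if it is contained in a quadtree cell of side length
at most `C` times the side length of `u`. -/
def IsAligned (d : ℕ) (C : ℝ) (u : Set (Fin d → ℝ)) : Prop :=
  ∃ (k : ℤ) (c : Fin d → ℤ),
    (2 : ℝ) ^ (-k) ≤ C * sideLength d u ∧ u ⊆ qtCell d k c

/-- A collection `F` of objects in `ℝ^d` is `c`-fat if for every hypercube `γ` of side
length `ℓ` there exist at most `c` points hitting all members of `F` that intersect `γ`
and have side length at least `ℓ`. -/
def CFat (d c : ℕ) (F : Set (Set (Fin d → ℝ))) : Prop :=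
  ∀ (a : Fin d → ℝ) (ℓ : ℝ), 0 < ℓ →
    ∃ P : Finset (Fin d → ℝ), P.card ≤ c ∧
      ∀ u ∈ F, (u ∩ hcube d a ℓ).Nonempty → ℓ ≤ sideLength d u → ∃ p ∈ P, p ∈ u

/-- A generalized quadtree cell: a quadtree cell, or the difference of an outer quadtree
cell and an inner quadtree cell contained in it. -/
def IsGenQuadtreeCell (d : ℕ) (γ : Set (Fin d → ℝ)) : Prop :=
  IsQuadtreeCell d γ ∨
    ∃ γp γm : Set (Fin d → ℝ), IsQuadtreeCell d γp ∧ IsQuadtreeCell d γm ∧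
      γm ⊆ γp ∧ γ = γp \ γm


open Classical

namespace QTP


variable {d : ℕ}

lemma two_zpow_pos (k : ℤ) : (0:ℝ) < (2:ℝ) ^ k := zpow_pos (by norm_num) k

lemma halve (k : ℤ) : (2:ℝ) ^ (-k) = 2 * (2:ℝ) ^ (-(k+1)) := by
  rw [show (-k) = 1 + (-(k+1)) by ring, zpow_add₀ (by norm_num : (2:ℝ) ≠ 0)]
  norm_num

/-- index of the child cube of `(k,c)` containing `x` -/
noncomputable def childIdx (k : ℤ) (c : Fin d → ℤ) (x : Fin d → ℝ) : Fin d → Bool :=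
  fun i => if (2 * (c i : ℝ) + 1) * (2:ℝ) ^ (-(k+1)) ≤ x i then true else false

lemma childIdx_true {k : ℤ} {c : Fin d → ℤ} {x : Fin d → ℝ} {i : Fin d} :
    childIdx k c x i = true ↔ (2 * (c i : ℝ) + 1) * (2:ℝ) ^ (-(k+1)) ≤ x i := by
  simp [childIdx]

lemma childIdx_false {k : ℤ} {c : Fin d → ℤ} {x : Fin d → ℝ} {i : Fin d} :
    childIdx k c x i = false ↔ x i < (2 * (c i : ℝ) + 1) * (2:ℝ) ^ (-(k+1)) := by
  simp [childIdx]

/-- integer corner of child `b` -/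
def childC (c : Fin d → ℤ) (b : Fin d → Bool) : Fin d → ℤ :=
  fun i => 2 * c i + (if b i then 1 else 0)

lemma mem_child (k : ℤ) (c : Fin d → ℤ) (b : Fin d → Bool) (x : Fin d → ℝ) :
    x ∈ qtCell d (k+1) (childC c b) ↔
      ∀ i, (2 * (c i : ℝ) + (if b i then 1 else 0)) * (2:ℝ)^(-(k+1)) ≤ x i ∧
        x i < (2 * (c i : ℝ) + (if b i then 1 else 0) + 1) * (2:ℝ)^(-(k+1)) := by
  simp only [qtCell, Set.mem_setOf_eq, childC]
  constructor <;> intro h i <;> obtain ⟨h1, h2⟩ := h i <;> constructor <;>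
    · first
      | (convert h1 using 2; push_cast; split <;> norm_num; done)
      | (convert h2 using 2; push_cast; split <;> norm_num; done)

lemma child_subset (k : ℤ) (c : Fin d → ℤ) (b : Fin d → Bool) :
    qtCell d (k+1) (childC c b) ⊆ qtCell d k c := by
  obtain ⟨ℓ, hp, hk1, hk⟩ : ∃ ℓ:ℝ, 0 < ℓ ∧ (2:ℝ)^(-(k+1)) = ℓ ∧ (2:ℝ)^(-k) = 2*ℓ :=
    ⟨_, two_zpow_pos _, rfl, halve k⟩
  intro x hx
  rw [mem_child] at hx
  intro i
  obtain ⟨h1, h2⟩ := hx i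
  rw [hk1] at h1 h2
  simp only [qtCell, Set.mem_setOf_eq, hk]
  rcases hb : b i with _ | _ <;> rw [hb] at h1 h2 <;> simp at h1 h2 <;>
    constructor <;> nlinarith

lemma mem_child_iff (k : ℤ) (c : Fin d → ℤ) (b : Fin d → Bool) (x : Fin d → ℝ)
    (hx : x ∈ qtCell d k c) :
    x ∈ qtCell d (k+1) (childC c b) ↔ childIdx k c x = b := by
  obtain ⟨ℓ, hp, hk1, hk⟩ : ∃ ℓ:ℝ, 0 < ℓ ∧ (2:ℝ)^(-(k+1)) = ℓ ∧ (2:ℝ)^(-k) = 2*ℓ :=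
    ⟨_, two_zpow_pos _, rfl, halve k⟩
  rw [mem_child]
  constructor
  · intro h
    funext i
    obtain ⟨h1, h2⟩ := h i
    rw [hk1] at h1 h2
    rcases hb : b i with _ | _ <;> rw [hb] at h1 h2 <;> simp at h1 h2
    · rw [childIdx_false, hk1]; linarith
    · rw [childIdx_true, hk1]; linarith
  · rintro rfl
    intro i
    obtain ⟨g1, g2⟩ := hx i
    rw [hk] at g1 g2
    rcases hb : childIdx k c x i with _ | _
    · have h := childIdx_false.mp hb
      rw [hk1] at h ⊢
      norm_num
      constructor <;> nlinarith
    · have h := childIdx_true.mp hb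
      rw [hk1] at h ⊢
      norm_num
      constructor <;> nlinarith

lemma mem_child_self (k : ℤ) (c : Fin d → ℤ) (x : Fin d → ℝ) (hx : x ∈ qtCell d k c) :
    x ∈ qtCell d (k+1) (childC c (childIdx k c x)) :=
  (mem_child_iff k c _ x hx).mpr rfl

lemma children_disjoint (k : ℤ) (c : Fin d → ℤ) {b b' : Fin d → Bool} (hbb : b ≠ b') :
    Disjoint (qtCell d (k+1) (childC c b)) (qtCell d (k+1) (childC c b')) := by
  rw [Set.disjoint_left]
  intro x hx hx'
  have h1 := (mem_child_iff k c b x (child_subset k c b hx)).mp hx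
  have h2 := (mem_child_iff k c b' x (child_subset k c b hx)).mp hx'
  exact hbb (h1 ▸ h2 ▸ rfl)

lemma union_children (k : ℤ) (c : Fin d → ℤ) :
    qtCell d k c = ⋃ b : Fin d → Bool, qtCell d (k+1) (childC c b) := by
  apply Set.Subset.antisymm
  · intro x hx
    exact Set.mem_iUnion.mpr ⟨childIdx k c x, mem_child_self k c x hx⟩
  · exact Set.iUnion_subset fun b => child_subset k c b


-- counting: fiberwise sum over children
lemma card_children_sum (k : ℤ) (c : Fin d → ℤ) (Q : Finset (Fin d → ℝ)) :
    (Q.filter (· ∈ qtCell d k c)).card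
      = ∑ b : Fin d → Bool, (Q.filter (· ∈ qtCell d (k+1) (childC c b))).card := by
  classical
  have h := Finset.card_eq_sum_card_fiberwise
    (f := fun x => childIdx k c x) (s := Q.filter (· ∈ qtCell d k c))
    (t := (Finset.univ : Finset (Fin d → Bool))) (fun x _ => Finset.mem_univ _)
  rw [h]
  apply Finset.sum_congr rfl
  intro b _
  congr 1
  ext x
  simp only [Finset.mem_filter]
  constructor
  · rintro ⟨⟨hQ, hσ⟩, hb⟩
    exact ⟨hQ, (mem_child_iff k c b x hσ).mpr hb⟩
  · rintro ⟨hQ, hc⟩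
    have hσ := child_subset k c b hc
    exact ⟨⟨hQ, hσ⟩, (mem_child_iff k c b x hσ).mp hc⟩

-- separation lemma
lemma separation (Q : Finset (Fin d → ℝ)) (k : ℤ) :
    ∃ K : ℕ, ∀ c' : Fin d → ℤ, (Q.filter (· ∈ qtCell d (k + K) c')).card ≤ 1 := by
  classical
  -- a positive lower bound on distances between distinct points
  obtain ⟨ε, hε, hsep⟩ : ∃ ε : ℝ, 0 < ε ∧ ∀ p ∈ Q, ∀ q ∈ Q, p ≠ q → ε ≤ dist p q := by
    set s := (Q ×ˢ Q).filter (fun pq => pq.1 ≠ pq.2) with hs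
    rcases s.eq_empty_or_nonempty with he | hne
    · refine ⟨1, one_pos, fun p hp q hq hpq => absurd ?_ (Finset.notMem_empty (p,q))⟩
      rw [← he, hs]
      simp [Finset.mem_filter, Finset.mem_product, hp, hq, hpq]
    · refine ⟨s.inf' hne (fun pq => dist pq.1 pq.2), ?_, ?_⟩
      · rw [Finset.lt_inf'_iff]
        rintro ⟨p, q⟩ hpq
        simp only [hs, Finset.mem_filter, Finset.mem_product] at hpq
        exact dist_pos.mpr hpq.2
      · intro p hp q hq hpq
        have hm : (p, q) ∈ s := by
          rw [hs, Finset.mem_filter, Finset.mem_product]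
          exact ⟨⟨hp, hq⟩, hpq⟩
        exact Finset.inf'_le _ hm
  -- choose K with 2^(-(k+K)) < ε
  obtain ⟨K, hK⟩ : ∃ K : ℕ, (2:ℝ) ^ (-(k + (K:ℤ))) < ε := by
    obtain ⟨K, hK⟩ := exists_pow_lt_of_lt_one (by positivity : (0:ℝ) < ε / (2:ℝ)^(-k))
      (by norm_num : (1:ℝ)/2 < 1)
    refine ⟨K, ?_⟩
    have h2 : (2:ℝ) ^ (-(k + (K:ℤ))) = (2:ℝ)^(-k) * ((1:ℝ)/2)^K := by
      rw [show -(k + (K:ℤ)) = (-k) + (-(K:ℤ)) by ring, zpow_add₀ (by norm_num : (2:ℝ) ≠ 0)]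
      congr 1
      rw [one_div, ← zpow_natCast ((2:ℝ)⁻¹) K, inv_zpow, ← zpow_neg]
    rw [h2]
    calc (2:ℝ)^(-k) * ((1:ℝ)/2)^K < (2:ℝ)^(-k) * (ε / (2:ℝ)^(-k)) := by
          exact mul_lt_mul_of_pos_left hK (two_zpow_pos _)
      _ = ε := by field_simp
  refine ⟨K, fun c' => Finset.card_le_one.mpr ?_⟩
  intro p hp q hq
  simp only [Finset.mem_filter] at hp hq
  by_contra hpq
  have hd : ε ≤ dist p q := hsep p hp.1 q hq.1 hpq
  have : dist p q < (2:ℝ) ^ (-(k + (K:ℤ))) := by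
    rw [dist_pi_lt_iff (two_zpow_pos _)]
    intro i
    obtain ⟨a1, a2⟩ := hp.2 i
    obtain ⟨b1, b2⟩ := hq.2 i
    rw [Real.dist_eq, abs_lt]
    constructor <;> nlinarith
  linarith

/-- The chain/annulus-finding lemma. -/
lemma chain (r : ℕ) (Q : Finset (Fin d → ℝ)) :
    ∀ K : ℕ, ∀ (k : ℤ) (c : Fin d → ℤ),
    (Q.filter (· ∉ qtCell d k c)).card ≤ r →
    (∀ c' : Fin d → ℤ, (Q.filter (· ∈ qtCell d (k + K) c')).card ≤ 1) →
    ∃ (k' : ℤ) (c' : Fin d → ℤ),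
      qtCell d k' c' ⊆ qtCell d k c ∧
      (Q.filter (· ∉ qtCell d k' c')).card ≤ r ∧
      ((Q.filter (· ∈ qtCell d k' c')).card ≤ 1 ∨
        ∀ b : Fin d → Bool,
          (Q.filter (· ∈ qtCell d (k'+1) (childC c' b))).card + r < Q.card) := by
  intro K
  induction K with
  | zero =>
    intro k c hinv hsep
    refine ⟨k, c, subset_rfl, hinv, Or.inl ?_⟩
    have := hsep c
    simpa using this
  | succ K ih =>
    intro k c hinv hsep
    -- maximal child
    obtain ⟨b0, _, hb0⟩ := Finset.exists_max_image (Finset.univ : Finset (Fin d → Bool))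
      (fun b => (Q.filter (· ∈ qtCell d (k+1) (childC c b))).card) ⟨default, Finset.mem_univ _⟩
    by_cases hcase : (Q.filter (· ∉ qtCell d (k+1) (childC c b0))).card ≤ r
    · -- recurse into child b0
      have hsep' : ∀ c' : Fin d → ℤ,
          (Q.filter (· ∈ qtCell d ((k+1) + K) c')).card ≤ 1 := by
        intro c'
        have : (k+1) + (K:ℤ) = k + ((K:ℕ)+1 : ℕ) := by push_cast; ring
        rw [this]
        exact hsep c'
      obtain ⟨k', c', hsub, hinv', hd⟩ := ih (k+1) (childC c b0) hcase hsep'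
      exact ⟨k', c', hsub.trans (child_subset k c b0), hinv', hd⟩
    · -- stop here
      push_neg at hcase
      refine ⟨k, c, subset_rfl, hinv, Or.inr ?_⟩
      intro b
      have hmax := hb0 b (Finset.mem_univ _)
      have hsplit := Finset.card_filter_add_card_filter_not
        (s := Q) (p := (· ∈ qtCell d (k+1) (childC c b0)))
      omega

lemma arith (d r n : ℕ) (hr : 1 ≤ r) (hn : r < n)
    (f g : (Fin d → Bool) → ℕ)
    (hfg : ∀ b, (g b : ℝ) ≤
      if r < f b then ((2:ℝ)^d+1)*(2*(f b)/r - 1) else 1)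
    (hsum : (∑ b, f b) ≤ n) (hlt : ∀ b, f b + r + 1 ≤ n) :
    1 + (∑ b, (g b : ℝ)) ≤ ((2:ℝ)^d+1)*(2*n/r - 1) := by
  classical
  set A : ℝ := (2:ℝ)^d + 1 with hA
  have hApos : (0:ℝ) < A := by positivity
  have hdA : (2:ℝ)^d ≤ A := by rw [hA]; linarith
  have h1A : (1:ℝ) ≤ A := by
    rw [hA]; have : (1:ℝ) ≤ 2^d := one_le_pow₀ (by norm_num); linarith
  have hrR : (0:ℝ) < r := by exact_mod_cast hr
  have hnr : (r:ℝ) + 1 ≤ n := by exact_mod_cast hn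
  have hnr' : 1 ≤ (n:ℝ)/r := by
    rw [le_div_iff₀ hrR]; linarith
  set S := (Finset.univ : Finset (Fin d → Bool)).filter (fun b => r < f b) with hS
  set T := (Finset.univ : Finset (Fin d → Bool)).filter (fun b => ¬ r < f b) with hT
  have hcards : S.card + T.card = 2^d := by
    rw [hS, hT, Finset.card_filter_add_card_filter_not]
    simp [Finset.card_univ]
  have hcardsR : (S.card:ℝ) + (T.card:ℝ) = (2:ℝ)^d := by exact_mod_cast hcards
  have hsplitg : (∑ b, (g b:ℝ)) = ∑ b ∈ S, (g b:ℝ) + ∑ b ∈ T, (g b:ℝ) :=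
    (Finset.sum_filter_add_sum_filter_not _ _ _).symm
  have hTbound : ∑ b ∈ T, (g b:ℝ) ≤ T.card := by
    calc ∑ b ∈ T, (g b:ℝ) ≤ ∑ _b ∈ T, (1:ℝ) := by
          apply Finset.sum_le_sum
          intro b hb
          have h := hfg b
          rw [if_neg (by rw [hT] at hb; exact (Finset.mem_filter.mp hb).2)] at h
          exact h
      _ = T.card := by simp
  have hSbound : ∑ b ∈ S, (g b:ℝ)
      ≤ (2*A) * ((∑ b ∈ S, (f b:ℝ))/r) - A * S.card := by
    calc ∑ b ∈ S, (g b:ℝ) ≤ ∑ b ∈ S, ((2*A/r) * (f b:ℝ) - A) := by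
          apply Finset.sum_le_sum
          intro b hb
          have h := hfg b
          rw [if_pos (by rw [hS] at hb; exact (Finset.mem_filter.mp hb).2)] at h
          calc (g b:ℝ) ≤ A*(2*(f b)/r - 1) := h
            _ = (2*A/r) * (f b:ℝ) - A := by ring
      _ = (2*A/r) * (∑ b ∈ S, (f b:ℝ)) - A * S.card := by
          rw [Finset.sum_sub_distrib, ← Finset.mul_sum, Finset.sum_const]
          simp [mul_comm]
      _ = (2*A) * ((∑ b ∈ S, (f b:ℝ))/r) - A * S.card := by ring
  have hMn : (∑ b ∈ S, (f b:ℝ)) ≤ (n:ℝ) := by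
    have h1 : ∑ b ∈ S, f b ≤ ∑ b, f b :=
      Finset.sum_le_sum_of_subset (Finset.filter_subset _ _)
    have h2 : ∑ b ∈ S, f b ≤ n := le_trans h1 hsum
    push_cast
    exact_mod_cast h2
  have hMnr : (∑ b ∈ S, (f b:ℝ))/r ≤ (n:ℝ)/r := by gcongr
  rw [hsplitg, show 2*(n:ℝ)/(r:ℝ) = 2*((n:ℝ)/(r:ℝ)) from by ring]
  rcases hc : S.card with _ | sc
  · -- no heavy children
    have hSe : S = ∅ := Finset.card_eq_zero.mp hc
    have hTc : (T.card:ℝ) = (2:ℝ)^d := by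
      rw [hc] at hcardsR; push_cast at hcardsR; linarith
    rw [hSe]
    simp only [Finset.sum_empty, zero_add]
    have hprod : A * 1 ≤ A * ((n:ℝ)/r) := by
      exact mul_le_mul_of_nonneg_left hnr' (le_of_lt hApos)
    nlinarith [hTbound, hTc]
  rcases sc with _ | sc
  · -- exactly one heavy child
    obtain ⟨b1, hb1⟩ := Finset.card_eq_one.mp hc
    have hTc : (T.card:ℝ) = (2:ℝ)^d - 1 := by
      rw [hc] at hcardsR; push_cast at hcardsR; linarith
    rw [hb1] at hSbound
    simp only [Finset.sum_singleton, Finset.card_singleton, Nat.cast_one] at hSbound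
    rw [hb1, Finset.sum_singleton]
    have hv : (f b1:ℝ)/r + 1 ≤ (n:ℝ)/r := by
      have h0 : ((f b1 : ℝ) + r) ≤ (n:ℝ) := by
        exact_mod_cast (by have := hlt b1; omega : f b1 + r ≤ n)
      have h1 : ((f b1:ℝ) + r)/r ≤ (n:ℝ)/r := by gcongr
      rw [add_div, div_self (ne_of_gt hrR)] at h1
      exact h1
    have hprod : (2*A) * ((f b1:ℝ)/r) ≤ (2*A) * ((n:ℝ)/r - 1) :=
      mul_le_mul_of_nonneg_left (by linarith) (by positivity)
    have hSc1 : (Finset.card {b1} : ℝ) = 1 := by simp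
    nlinarith [hSbound, hTbound, hprod]
  · -- at least two heavy children
    have hScR : (2:ℝ) ≤ (S.card:ℝ) := by rw [hc]; push_cast; linarith
    have hprod : (2*A) * ((∑ b ∈ S, (f b:ℝ))/r) ≤ (2*A) * ((n:ℝ)/r) :=
      mul_le_mul_of_nonneg_left hMnr (by positivity)
    have hprod2 : A * 2 ≤ A * (S.card:ℝ) :=
      mul_le_mul_of_nonneg_left hScR (le_of_lt hApos)
    nlinarith [hSbound, hTbound, hcardsR]

lemma main (d r : ℕ) (hr : 1 ≤ r) :
    ∀ n : ℕ, ∀ (Q : Finset (Fin d → ℝ)) (k : ℤ) (c : Fin d → ℤ),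
    Q.card = n → (Q : Set (Fin d → ℝ)) ⊆ qtCell d k c →
    ∃ l : List (Set (Fin d → ℝ)),
      (∀ γ ∈ l, IsGenQuadtreeCell d γ) ∧
      List.Pairwise Disjoint l ∧
      (∀ γ ∈ l, γ ⊆ qtCell d k c) ∧
      (qtCell d k c ⊆ ⋃ γ ∈ l, γ) ∧
      (∀ γ ∈ l, ((Q : Set (Fin d → ℝ)) ∩ γ).ncard ≤ r) ∧
      ((l.length : ℝ) ≤ if r < n then ((2:ℝ)^d+1)*(2*n/r - 1) else 1) := by
  have hrR : (0:ℝ) < r := by exact_mod_cast hr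
  intro n
  induction n using Nat.strong_induction_on with
  | _ n ih =>
  intro Q k c hcard hQ
  by_cases hnr : n ≤ r
  · -- leaf
    refine ⟨[qtCell d k c], ?_, ?_, ?_, ?_, ?_, ?_⟩
    · rintro γ hγ
      rw [List.mem_singleton] at hγ
      exact Or.inl ⟨k, c, hγ⟩
    · simp
    · intro γ hγ; rw [List.mem_singleton] at hγ; exact hγ ▸ subset_rfl
    · intro x hx; exact Set.mem_iUnion₂.mpr ⟨qtCell d k c, List.mem_singleton.mpr rfl, hx⟩
    · intro γ hγ; rw [List.mem_singleton] at hγ; subst hγ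
      rw [Set.inter_eq_self_of_subset_left hQ, Set.ncard_coe_finset, hcard]
      exact hnr
    · rw [if_neg (by omega)]; norm_num
  · -- internal
    push_neg at hnr
    have hnR : (r:ℝ) + 1 ≤ (n:ℝ) := by exact_mod_cast hnr
    have hA1 : (1:ℝ) ≤ (2:ℝ)^d + 1 := by
      have : (0:ℝ) ≤ 2^d := by positivity
      linarith
    have hquot : (1:ℝ) ≤ 2*(n:ℝ)/r - 1 := by
      rw [le_sub_iff_add_le, le_div_iff₀ hrR]; linarith
    obtain ⟨K, hsep⟩ := separation Q k
    have hfilter0 : (Q.filter (· ∉ qtCell d k c)).card ≤ r := by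
      have : Q.filter (· ∉ qtCell d k c) = ∅ := by
        rw [Finset.filter_eq_empty_iff]
        intro x hx h
        exact h (hQ hx)
      rw [this]; simp
    obtain ⟨k', c', hsub, hann, hdisj⟩ := chain r Q K k c hfilter0 hsep
    -- the annulus and its count
    have hannset : (Q : Set (Fin d → ℝ)) ∩ (qtCell d k c \ qtCell d k' c')
        = ↑(Q.filter (· ∉ qtCell d k' c')) := by
      ext x
      simp only [Set.mem_inter_iff, Set.mem_diff, Finset.coe_filter, Set.mem_setOf_eq,
        Finset.mem_coe]
      exact ⟨fun h => ⟨h.1, h.2.2⟩, fun h => ⟨h.1, hQ h.1, h.2⟩⟩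
    have hanncard : ((Q : Set (Fin d → ℝ)) ∩ (qtCell d k c \ qtCell d k' c')).ncard ≤ r := by
      rw [hannset, Set.ncard_coe_finset]; exact hann
    have hanngen : IsGenQuadtreeCell d (qtCell d k c \ qtCell d k' c') :=
      Or.inr ⟨_, _, ⟨k, c, rfl⟩, ⟨k', c', rfl⟩, hsub, rfl⟩
    rcases hdisj with hone | hall
    · -- small inner cube: two cells
      refine ⟨[qtCell d k c \ qtCell d k' c', qtCell d k' c'], ?_, ?_, ?_, ?_, ?_, ?_⟩
      · intro γ hγ
        rcases List.mem_pair.mp hγ with h | h <;> subst h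
        · exact hanngen
        · exact Or.inl ⟨k', c', rfl⟩
      · refine List.pairwise_cons.mpr ⟨?_, by simp⟩
        intro γ hγ
        rw [List.mem_singleton] at hγ; subst hγ
        exact Set.disjoint_left.mpr (fun x hx hx' => hx.2 hx')
      · intro γ hγ
        rcases List.mem_pair.mp hγ with h | h <;> subst h
        · exact Set.diff_subset
        · exact hsub
      · intro x hx
        by_cases hxτ : x ∈ qtCell d k' c'
        · exact Set.mem_iUnion₂.mpr ⟨qtCell d k' c',
            List.mem_cons_of_mem _ (List.mem_singleton.mpr rfl), hxτ⟩
        · exact Set.mem_iUnion₂.mpr ⟨qtCell d k c \ qtCell d k' c',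
            List.mem_cons_self, ⟨hx, hxτ⟩⟩
      · intro γ hγ
        rcases List.mem_pair.mp hγ with h | h <;> subst h
        · exact hanncard
        · have : (Q : Set (Fin d → ℝ)) ∩ qtCell d k' c'
              = ↑(Q.filter (· ∈ qtCell d k' c')) := by
            ext x
            simp only [Set.mem_inter_iff, Finset.coe_filter, Set.mem_setOf_eq, Finset.mem_coe]
          rw [this, Set.ncard_coe_finset]
          omega
      · rw [if_pos hnr]
        show (2:ℝ) ≤ _
        have h2 : (2:ℝ)^d+1 ≤ ((2:ℝ)^d+1)*(2*(n:ℝ)/r - 1) :=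
          le_mul_of_one_le_right (by positivity) hquot
        have : (1:ℝ) ≤ 2^d := one_le_pow₀ (by norm_num)
        linarith
    · -- recurse into the 2^d children of the inner cube
      have hrec : ∀ b : Fin d → Bool,
          ∃ l : List (Set (Fin d → ℝ)),
            (∀ γ ∈ l, IsGenQuadtreeCell d γ) ∧
            List.Pairwise Disjoint l ∧
            (∀ γ ∈ l, γ ⊆ qtCell d (k'+1) (childC c' b)) ∧
            (qtCell d (k'+1) (childC c' b) ⊆ ⋃ γ ∈ l, γ) ∧
            (∀ γ ∈ l, ((↑(Q.filter (· ∈ qtCell d (k'+1) (childC c' b))) : Set (Fin d → ℝ))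
              ∩ γ).ncard ≤ r) ∧
            ((l.length : ℝ) ≤
              if r < (Q.filter (· ∈ qtCell d (k'+1) (childC c' b))).card
              then ((2:ℝ)^d+1)*(2*((Q.filter (· ∈ qtCell d (k'+1) (childC c' b))).card)/r - 1)
              else 1) := by
        intro b
        have hlt : (Q.filter (· ∈ qtCell d (k'+1) (childC c' b))).card < n := by
          have := hall b; omega
        exact ih _ hlt _ (k'+1) (childC c' b) rfl
          (fun x hx => (Finset.mem_filter.mp hx).2)
      choose L hL1 hL2 hL3 hL4 hL5 hL6 using hrec
      set ann := qtCell d k c \ qtCell d k' c' with hanndef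
      refine ⟨ann :: ((Finset.univ : Finset (Fin d → Bool)).toList.map L).flatten,
        ?_, ?_, ?_, ?_, ?_, ?_⟩
      · intro γ hγ
        rcases List.mem_cons.mp hγ with h | h
        · exact h ▸ hanngen
        · obtain ⟨lb, hlb, hγlb⟩ := List.mem_flatten.mp h
          obtain ⟨b, _, rfl⟩ := List.mem_map.mp hlb
          exact hL1 b γ hγlb
      · refine List.pairwise_cons.mpr ⟨?_, ?_⟩
        · intro γ hγ
          obtain ⟨lb, hlb, hγlb⟩ := List.mem_flatten.mp hγ
          obtain ⟨b, _, rfl⟩ := List.mem_map.mp hlb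
          have hγsub : γ ⊆ qtCell d k' c' := (hL3 b γ hγlb).trans (child_subset k' c' b)
          exact Set.disjoint_left.mpr (fun x hx hx' => hx.2 (hγsub hx'))
        · rw [List.pairwise_flatten]
          refine ⟨?_, ?_⟩
          · intro lb hlb
            obtain ⟨b, _, rfl⟩ := List.mem_map.mp hlb
            exact hL2 b
          · refine List.Pairwise.map _ ?_ (Finset.nodup_toList _)
            intro b b' hbb γ hγ γ' hγ'
            exact Set.disjoint_of_subset (hL3 b γ hγ) (hL3 b' γ' hγ')
              (children_disjoint k' c' hbb)
      · intro γ hγ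
        rcases List.mem_cons.mp hγ with h | h
        · exact h ▸ Set.diff_subset
        · obtain ⟨lb, hlb, hγlb⟩ := List.mem_flatten.mp h
          obtain ⟨b, _, rfl⟩ := List.mem_map.mp hlb
          exact ((hL3 b γ hγlb).trans (child_subset k' c' b)).trans hsub
      · intro x hx
        by_cases hxτ : x ∈ qtCell d k' c'
        · rw [union_children k' c'] at hxτ
          obtain ⟨b, hb⟩ := Set.mem_iUnion.mp hxτ
          obtain ⟨γ, hγmem, hγx⟩ := Set.mem_iUnion₂.mp (hL4 b hb)
          refine Set.mem_iUnion₂.mpr ⟨γ, List.mem_cons_of_mem _ ?_, hγx⟩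
          exact List.mem_flatten.mpr ⟨L b, List.mem_map.mpr
            ⟨b, Finset.mem_toList.mpr (Finset.mem_univ b), rfl⟩, hγmem⟩
        · exact Set.mem_iUnion₂.mpr ⟨ann, List.mem_cons_self, ⟨hx, hxτ⟩⟩
      · intro γ hγ
        rcases List.mem_cons.mp hγ with h | h
        · exact h ▸ hanncard
        · obtain ⟨lb, hlb, hγlb⟩ := List.mem_flatten.mp h
          obtain ⟨b, _, rfl⟩ := List.mem_map.mp hlb
          have heq : (Q : Set (Fin d → ℝ)) ∩ γ
              = (↑(Q.filter (· ∈ qtCell d (k'+1) (childC c' b))) : Set (Fin d → ℝ)) ∩ γ := by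
            ext x
            simp only [Set.mem_inter_iff, Finset.coe_filter, Set.mem_setOf_eq, Finset.mem_coe]
            exact ⟨fun hh => ⟨⟨hh.1, hL3 b γ hγlb hh.2⟩, hh.2⟩, fun hh => ⟨hh.1.1, hh.2⟩⟩
          rw [heq]
          exact hL5 b γ hγlb
      · rw [if_pos hnr]
        have hlen : ((ann :: ((Finset.univ : Finset (Fin d → Bool)).toList.map L).flatten).length : ℝ)
            = 1 + ∑ b : Fin d → Bool, ((L b).length : ℝ) := by
          rw [List.length_cons, List.length_flatten, List.map_map]
          push_cast
          rw [add_comm]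
          congr 1
          rw [← Finset.sum_map_toList]
          norm_num
        rw [hlen]
        refine arith d r n hr hnr
          (fun b => (Q.filter (· ∈ qtCell d (k'+1) (childC c' b))).card)
          (fun b => (L b).length) (fun b => hL6 b) ?_ ?_
        · show ∑ b : Fin d → Bool,
              (Q.filter (· ∈ qtCell d (k'+1) (childC c' b))).card ≤ n
          rw [← card_children_sum k' c' Q]
          calc (Q.filter (· ∈ qtCell d k' c')).card ≤ Q.card := Finset.card_filter_le _ _
            _ = n := hcard
        · intro b
          show (Q.filter (· ∈ qtCell d (k'+1) (childC c' b))).card + r + 1 ≤ n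
          have := hall b
          omega

lemma base_cube (d : ℕ) :
    {x : Fin d → ℝ | ∀ i, 0 ≤ x i ∧ x i < 2} = qtCell d (-1) (fun _ => 0) := by
  ext x
  simp only [qtCell, Set.mem_setOf_eq]
  norm_num

end QTP

/-- Quadtree partitioning: given a parameter `r ≥ 1` and `n` points in `[0,2)^d`, the
cube `[0,2)^d` can be partitioned into `O(n/r)` generalized quadtree cells, each
containing at most `r` of the points. -/
theorem quadtree_partitioning (d : ℕ) :
    ∃ C : ℝ, 0 < C ∧ ∀ r : ℕ, 1 ≤ r →
      ∀ P : Finset (Fin d → ℝ), (P : Set (Fin d → ℝ)) ⊆ {x | ∀ i, 0 ≤ x i ∧ x i < 2} →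
      ∃ (m : ℕ) (γ : Fin m → Set (Fin d → ℝ)),
        (∀ i, IsGenQuadtreeCell d (γ i)) ∧
        Pairwise (Function.onFun Disjoint γ) ∧
        (⋃ i, γ i) = {x | ∀ i, 0 ≤ x i ∧ x i < 2} ∧
        (∀ i, ((P : Set (Fin d → ℝ)) ∩ γ i).ncard ≤ r) ∧
        (m : ℝ) ≤ C * ((P.card : ℝ) / r + 1) := by
  refine ⟨(2:ℝ)^(d+2), by positivity, ?_⟩
  intro r hr P hP
  have hrR : (0:ℝ) < r := by exact_mod_cast hr
  rw [QTP.base_cube d] at hP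
  obtain ⟨l, hl1, hl2, hl3, hl4, hl5, hl6⟩ :=
    QTP.main d r hr P.card P (-1) (fun _ => 0) rfl hP
  refine ⟨l.length, fun i => l.get i, ?_, ?_, ?_, ?_, ?_⟩
  · intro i
    exact hl1 _ (List.get_mem l i)
  · intro i j hij
    rcases lt_or_gt_of_ne hij with h | h
    · exact List.pairwise_iff_get.mp hl2 i j h
    · exact (List.pairwise_iff_get.mp hl2 j i h).symm
  · rw [QTP.base_cube d]
    apply Set.Subset.antisymm
    · apply Set.iUnion_subset
      intro i
      exact hl3 _ (List.get_mem l i)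
    · intro x hx
      obtain ⟨γ, hγmem, hγx⟩ := Set.mem_iUnion₂.mp (hl4 hx)
      obtain ⟨i, rfl⟩ := List.mem_iff_get.mp hγmem
      exact Set.mem_iUnion.mpr ⟨i, hγx⟩
  · intro i
    exact hl5 _ (List.get_mem l i)
  · set n := P.card
    have hn0 : (0:ℝ) ≤ (n:ℝ)/r := by positivity
    split_ifs at hl6 with h
    · -- r < n
    
      have hnR : (r:ℝ) + 1 ≤ n := by exact_mod_cast h
      have hd2 : (2:ℝ)^d + 1 ≤ 2^(d+1) := by
        rw [pow_succ]
        have : (1:ℝ) ≤ 2^d := one_le_pow₀ (by norm_num)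
        linarith
      have hquot : (0:ℝ) ≤ 2*(n:ℝ)/r - 1 := by
        rw [sub_nonneg, le_div_iff₀ hrR]; linarith
      have hstep : (2:ℝ)*(n:ℝ)/r - 1 ≤ 2*((n:ℝ)/r + 1) := by
        rw [show (2:ℝ)*(n:ℝ)/r = 2*((n:ℝ)/r) from by ring]
        linarith
      calc (l.length : ℝ) ≤ ((2:ℝ)^d+1)*(2*n/r - 1) := hl6
        _ ≤ (2:ℝ)^(d+1) * (2*((n:ℝ)/r + 1)) := by
            apply mul_le_mul hd2 hstep hquot (by positivity)
        _ = (2:ℝ)^(d+2) * ((n:ℝ)/r + 1) := by ring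
    · calc (l.length : ℝ) ≤ 1 := hl6
        _ ≤ (2:ℝ)^(d+2) * ((n:ℝ)/r + 1) := by
            have h1 : (1:ℝ) ≤ (2:ℝ)^(d+2) := one_le_pow₀ (by norm_num)
            nlinarith
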